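/- arXiv:math/0003031 — 3 statements merged into one kernel-verified Lean document; each statement's English description precedes it below -/
import Mathlib

section
/- Giambelli formula: for every partition μ = (p_1,…,p_d | q_1,…,q_d) (Frobenius notation, d = d(μ)) and every n ≥ 1, the identity s_{μ;a} = det[s_{(p_i|q_j);a}]_{i,j=1}^{d} holds in ℂ[x_1,…,x_n]. -/
open MvPolynomial Finset

noncomputable section

/-- dual parameter sequence: `â i = - a (-i + 1)`. -/
def dualSeq (a : ℤ → ℂ) : ℤ → ℂ := fun i => -a (-i + 1)

/-- shifted sequence `(τ^r a) i = a (i + r)`. -/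
def shiftSeq (r : ℤ) (a : ℤ → ℂ) : ℤ → ℂ := fun i => a (i + r)

/-- elementary symmetric polynomial `e_deg (a 1, …, a num)` of complex numbers. -/
def eSeq (a : ℤ → ℂ) (num deg : ℕ) : ℂ :=
  ∑ S ∈ Finset.powersetCard deg (Finset.range num), ∏ i ∈ S, a ((i : ℤ) + 1)

/-- `h_{k;a}` in `ℂ[x_1,…,x_n]`: `Σ_{i=1}^k (-1)^{k-i} e_{k-i}(a_1,…,a_{k-1}) h_i`;
`1` for `k = 0`, `0` for `k < 0`. -/
def hkaP (a : ℤ → ℂ) (n : ℕ) (k : ℤ) : MvPolynomial (Fin n) ℂ :=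
  if k < 0 then 0 else if k = 0 then 1 else
  ∑ i ∈ Finset.Icc 1 k.toNat,
    C ((-1) ^ (k.toNat - i) * eSeq a (k.toNat - 1) (k.toNat - i)) * hsymm (Fin n) ℂ i

/-- the multiparameter Schur polynomial `s_{μ;a}` in `ℂ[x_1,…,x_n]`, defined as
`det [h_{μ_i - i + j; τ^{1-j} a}]` of size `ℓ(μ) × ℓ(μ)`. -/
def sMuP (a : ℤ → ℂ) (μ : YoungDiagram) (n : ℕ) : MvPolynomial (Fin n) ℂ :=
  Matrix.det (Matrix.of fun i j : Fin (μ.colLen 0) =>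
    hkaP (shiftSeq (-(j : ℤ)) a) n ((μ.rowLen i : ℤ) - i + j))

/-- number of diagonal cells `d(μ)` of a Young diagram. -/
def dep (μ : YoungDiagram) : ℕ := (μ.cells.filter (fun c => c.1 = c.2)).card

/-- Frobenius coordinate `p_i(μ) = μ_{i+1} - (i+1)` (0-indexed `i`). -/
def pF (μ : YoungDiagram) (i : ℕ) : ℕ := μ.rowLen i - (i + 1)

/-- Frobenius coordinate `q_i(μ) = μ'_{i+1} - (i+1)` (0-indexed `i`). -/
def qF (μ : YoungDiagram) (i : ℕ) : ℕ := μ.colLen i - (i + 1)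

/-- the hook Young diagram `(p|q) = (p+1, 1^q)`. -/
def hookYD (p q : ℕ) : YoungDiagram where
  cells := (Finset.range (q + 1) ×ˢ Finset.range (p + 1)).filter
    (fun c => c.1 = 0 ∨ c.2 = 0)
  isLowerSet := by
    intro c1 c2 hle hc1
    simp only [Finset.coe_filter, Finset.mem_product, Finset.mem_range, Set.mem_setOf_eq,
      Finset.mem_coe] at *
    obtain ⟨h1, h2⟩ := hle
    omega

set_option maxHeartbeats 1600000

-- ## auxiliary material for the proof

section AuxCombinatorics


lemma down_closed_mem_iff (s : Finset ℕ) (h : ∀ a b : ℕ, a ≤ b → b ∈ s → a ∈ s) (k : ℕ) :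
    k ∈ s ↔ k < s.card := by
  constructor
  · intro hk
    have hsub : Finset.range (k+1) ⊆ s := by
      intro x hx
      simp only [Finset.mem_range] at hx
      exact h x k (by omega) hk
    have := Finset.card_le_card hsub
    simp only [Finset.card_range] at this
    omega
  · intro hk
    by_contra hcon
    have hsub : s ⊆ Finset.range k := by
      intro x hx
      simp only [Finset.mem_range]
      by_contra hx2
      exact hcon (h k x (by omega) hx)
    have := Finset.card_le_card hsub
    simp only [Finset.card_range] at this
    omega

lemma mem_diag_iff_lt_dep (μ : YoungDiagram) (i : ℕ) : (i, i) ∈ μ ↔ i < dep μ := by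
  classical
  set s : Finset ℕ := (μ.cells.filter (fun c => c.1 = c.2)).image Prod.fst with hs
  have hcard : s.card = dep μ := by
    rw [hs, dep]
    apply Finset.card_image_of_injOn
    intro c hc c' hc' hcc
    simp only [Finset.mem_coe, Finset.mem_filter] at hc hc'
    exact Prod.ext hcc (by rw [← hc.2, ← hc'.2, hcc])
  have hmem : ∀ k, k ∈ s ↔ (k, k) ∈ μ := by
    intro k
    rw [hs]
    simp only [Finset.mem_image, Finset.mem_filter]
    constructor
    · rintro ⟨c, ⟨hc1, hc2⟩, hc3⟩
      have : c = (k, k) := Prod.ext hc3 (by rw [← hc2, hc3])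
      rwa [this, YoungDiagram.mem_cells] at hc1
    · intro hk
      exact ⟨(k, k), ⟨(YoungDiagram.mem_cells _).2 hk, rfl⟩, rfl⟩
  have hdown : ∀ a b : ℕ, a ≤ b → b ∈ s → a ∈ s := by
    intro a b hab hb
    rw [hmem] at hb ⊢
    exact μ.up_left_mem hab hab hb
  rw [← hmem, down_closed_mem_iff s hdown, hcard]

lemma lt_rowLen_of_lt_dep (μ : YoungDiagram) (i : ℕ) (h : i < dep μ) : i < μ.rowLen i := by
  rw [← YoungDiagram.mem_iff_lt_rowLen]
  exact (mem_diag_iff_lt_dep μ i).2 h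

lemma lt_colLen_of_lt_dep (μ : YoungDiagram) (i : ℕ) (h : i < dep μ) : i < μ.colLen i := by
  rw [← YoungDiagram.mem_iff_lt_colLen]
  exact (mem_diag_iff_lt_dep μ i).2 h

lemma rowLen_le_of_dep_le (μ : YoungDiagram) (i : ℕ) (h : dep μ ≤ i) : μ.rowLen i ≤ i := by
  by_contra hcon
  have : (i, i) ∈ μ := YoungDiagram.mem_iff_lt_rowLen.2 (by omega)
  rw [mem_diag_iff_lt_dep] at this
  omega

lemma rowLen_pos_of_lt_colLen (μ : YoungDiagram) (i : ℕ) (h : i < μ.colLen 0) :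
    0 < μ.rowLen i := by
  rw [← YoungDiagram.mem_iff_lt_colLen] at h
  rw [← YoungDiagram.mem_iff_lt_rowLen]
  exact h

lemma qF_lt_colLen (μ : YoungDiagram) (j : ℕ) (hj : j < dep μ) : qF μ j < μ.colLen 0 := by
  have h1 := lt_colLen_of_lt_dep μ j hj
  have h2 := μ.colLen_anti 0 j (Nat.zero_le _)
  rw [qF]
  omega

lemma qF_strict_anti (μ : YoungDiagram) (i j : ℕ) (hij : i < j) (hj : j < dep μ) :
    qF μ j < qF μ i := by
  have h1 := lt_colLen_of_lt_dep μ j hj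
  have h2 := μ.colLen_anti i j (by omega)
  rw [qF, qF]
  omega

lemma dep_le_colLen (μ : YoungDiagram) : dep μ ≤ μ.colLen 0 := by
  rcases Nat.eq_zero_or_pos (dep μ) with h | h
  · omega
  have := lt_colLen_of_lt_dep μ (dep μ - 1) (by omega)
  have h2 := μ.colLen_anti 0 (dep μ - 1) (Nat.zero_le _)
  omega

/-- key disjointness : for `i ≥ d`, `i - rowLen i` is never a `qF` value -/
lemma key_disjoint (μ : YoungDiagram) (i j : ℕ) (hi : dep μ ≤ i) (hiℓ : i < μ.colLen 0)
    (hj : j < dep μ) :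
    i - μ.rowLen i ≠ qF μ j := by
  have hrow := rowLen_le_of_dep_le μ i hi
  have hcol := lt_colLen_of_lt_dep μ j hj
  by_cases hmem : (i, j) ∈ μ
  · have h1 : j < μ.rowLen i := YoungDiagram.mem_iff_lt_rowLen.1 hmem
    have h2 : i < μ.colLen j := YoungDiagram.mem_iff_lt_colLen.1 hmem
    rw [qF]
    omega
  · have h1 : μ.rowLen i ≤ j := by
      by_contra hcon
      exact hmem (YoungDiagram.mem_iff_lt_rowLen.2 (by omega))
    have h2 : μ.colLen j ≤ i := by
      by_contra hcon
      exact hmem (YoungDiagram.mem_iff_lt_colLen.2 (by omega))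
    rw [qF]
    have h3 := rowLen_pos_of_lt_colLen μ i hiℓ
    omega

lemma rowLen_eq_pF (μ : YoungDiagram) (i : ℕ) (h : i < dep μ) :
    μ.rowLen i = pF μ i + i + 1 := by
  have := lt_rowLen_of_lt_dep μ i h
  rw [pF]
  omega

-- ### hook facts

lemma hook_mem (p q i j : ℕ) : (i, j) ∈ hookYD p q ↔ (i < q + 1 ∧ j < p + 1 ∧ (i = 0 ∨ j = 0)) := by
  show (i, j) ∈ (hookYD p q).cells ↔ _
  simp only [hookYD, Finset.mem_filter, Finset.mem_product, Finset.mem_range]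
  tauto

lemma hook_rowLen0 (p q : ℕ) : (hookYD p q).rowLen 0 = p + 1 := by
  have h1 := (YoungDiagram.mem_iff_lt_rowLen (μ := hookYD p q) (i := 0) (j := p)).1
    ((hook_mem p q 0 p).2 (by omega))
  have h2 : ¬ ((0, p+1) ∈ hookYD p q) := by rw [hook_mem]; omega
  rw [YoungDiagram.mem_iff_lt_rowLen] at h2
  omega

lemma hook_rowLen1 (p q i : ℕ) (h1 : 1 ≤ i) (h2 : i ≤ q) : (hookYD p q).rowLen i = 1 := by
  have h3 := (YoungDiagram.mem_iff_lt_rowLen (μ := hookYD p q) (i := i) (j := 0)).1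
    ((hook_mem p q i 0).2 (by omega))
  have h4 : ¬ ((i, 1) ∈ hookYD p q) := by rw [hook_mem]; omega
  rw [YoungDiagram.mem_iff_lt_rowLen] at h4
  omega

lemma hook_colLen0 (p q : ℕ) : (hookYD p q).colLen 0 = q + 1 := by
  have h1 := (YoungDiagram.mem_iff_lt_colLen (μ := hookYD p q) (i := q) (j := 0)).1
    ((hook_mem p q q 0).2 (by omega))
  have h2 : ¬ ((q+1, 0) ∈ hookYD p q) := by rw [hook_mem]; omega
  rw [YoungDiagram.mem_iff_lt_colLen] at h2
  omega

-- hook determinant lemma (appended to frob.lean for checking)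

def AfD (a : ℤ → ℂ) (n : ℕ) (r : ℤ) (j : ℕ) : MvPolynomial (Fin n) ℂ :=
  hkaP (shiftSeq (-(j : ℤ)) a) n ((j : ℤ) - r)

lemma AfD_zero (a : ℤ → ℂ) (n : ℕ) (r : ℤ) (j : ℕ) (h : (j : ℤ) < r) : AfD a n r j = 0 := by
  rw [AfD, hkaP, if_pos (by omega)]

lemma AfD_diag (a : ℤ → ℂ) (n : ℕ) (j : ℕ) : AfD a n ((j : ℕ) : ℤ) j = 1 := by
  rw [AfD, hkaP, if_neg (by omega), if_pos (by omega)]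

set_option maxHeartbeats 1000000 in
lemma hook_det_eq (a : ℤ → ℂ) (n : ℕ) (ℓ p q : ℕ) (hq : q < ℓ) :
    sMuP a (hookYD p q) n = (-1) ^ q *
      ((Matrix.of fun k j : Fin ℓ => AfD a n ((k : ℕ) : ℤ) (j : ℕ)).updateRow ⟨q, hq⟩
        (fun j : Fin ℓ => AfD a n (-((p : ℤ) + 1)) (j : ℕ))).det := by
  classical
  have hc : (hookYD p q).colLen 0 = q + 1 := hook_colLen0 p q
  -- step 1 : reindex to `Fin (q+1)`
  set G : Matrix (Fin (q + 1)) (Fin (q + 1)) (MvPolynomial (Fin n) ℂ) :=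
    (Matrix.of fun i j : Fin ((hookYD p q).colLen 0) =>
      hkaP (shiftSeq (-(j : ℤ)) a) n (((hookYD p q).rowLen i : ℤ) - i + j)).submatrix
      (finCongr hc.symm) (finCongr hc.symm) with hG
  have h1 : sMuP a (hookYD p q) n = G.det := by
    rw [sMuP, hG, Matrix.det_submatrix_equiv_self]
  -- entries of G
  have hGval : ∀ i j : Fin (q + 1), G i j =
      hkaP (shiftSeq (-(j : ℤ)) a) n (((hookYD p q).rowLen (i : ℕ) : ℤ) - (i : ℕ) + (j : ℕ)) := by
    intro i j
    rw [hG, Matrix.submatrix_apply, Matrix.of_apply]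
    simp only [finCongr_apply, Fin.coe_cast]
  have hG0 : ∀ (i j : Fin (q + 1)), (i : ℕ) = 0 → G i j = AfD a n (-((p : ℤ) + 1)) (j : ℕ) := by
    intro i j hi
    rw [hGval, AfD]
    congr 1
    rw [hi, hook_rowLen0]
    push_cast
    ring
  have hG1 : ∀ (i j : Fin (q + 1)), 1 ≤ (i : ℕ) → G i j = AfD a n (((i : ℕ) : ℤ) - 1) (j : ℕ) := by
    intro i j hi
    rw [hGval, AfD]
    congr 1
    rw [hook_rowLen1 p q (i : ℕ) hi (by omega)]
    push_cast
    ring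
  -- step 2 : rotate rows
  set T : Matrix (Fin (q + 1)) (Fin (q + 1)) (MvPolynomial (Fin n) ℂ) :=
    Matrix.of fun k j : Fin (q + 1) =>
      if (k : ℕ) = q then AfD a n (-((p : ℤ) + 1)) (j : ℕ)
      else AfD a n ((k : ℕ) : ℤ) (j : ℕ) with hT
  have hTG : T = G.submatrix (finRotate (q + 1)) id := by
    ext k j
    have hval : ((finRotate (q + 1) k : Fin (q+1)) : ℕ) = if k = Fin.last q then 0 else (k : ℕ) + 1 :=
      coe_finRotate k
    by_cases hk : (k : ℕ) = q
    · have hkl : k = Fin.last q := by apply Fin.ext; simpa using hk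
      rw [Matrix.submatrix_apply, id, hG0 _ _ (by rw [hval, if_pos hkl])]
      simp only [hT, Matrix.of_apply, if_pos hk]
    · have hkl : ¬ (k = Fin.last q) := by
        intro hcon; apply hk; rw [hcon]; simp
      have hval2 : ((finRotate (q + 1) k : Fin (q + 1)) : ℕ) = (k : ℕ) + 1 := by
        rw [hval, if_neg hkl]
      rw [Matrix.submatrix_apply, id, hG1 _ _ (by omega)]
      simp only [hT, Matrix.of_apply, if_neg hk]
      rw [hval2]
      have harg : (((k : ℕ) + 1 : ℕ) : ℤ) - 1 = ((k : ℕ) : ℤ) := by push_cast; ring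
      rw [harg]
  have h2 : G.det = (-1) ^ q * T.det := by
    rw [hTG, Matrix.det_permute, sign_finRotate]
    have : ((((-1 : ℤˣ) ^ q : ℤˣ) : ℤ) : MvPolynomial (Fin n) ℂ) = (-1 : MvPolynomial (Fin n) ℂ) ^ q := by
      push_cast
      rfl
    rw [Nat.add_sub_cancel, this, ← mul_assoc, ← mul_pow]
    norm_num
  -- step 3 : extend to `Fin ℓ`
  set M : Matrix (Fin ℓ) (Fin ℓ) (MvPolynomial (Fin n) ℂ) :=
    (Matrix.of fun k j : Fin ℓ => AfD a n ((k : ℕ) : ℤ) (j : ℕ)).updateRow ⟨q, hq⟩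
      (fun j : Fin ℓ => AfD a n (-((p : ℤ) + 1)) (j : ℕ)) with hM
  have hMval : ∀ k j : Fin ℓ, M k j =
      if (k : ℕ) = q then AfD a n (-((p : ℤ) + 1)) (j : ℕ) else AfD a n ((k : ℕ) : ℤ) (j : ℕ) := by
    intro k j
    rw [hM, Matrix.updateRow_apply]
    by_cases hk : (k : ℕ) = q
    · rw [if_pos (by apply Fin.ext; simpa using hk), if_pos hk]
    · rw [if_neg (by intro hcon; apply hk; rw [hcon]), if_neg hk]
      rfl
  have hsum : (q + 1) + (ℓ - (q + 1)) = ℓ := by omega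
  set e2 : (Fin (q + 1)) ⊕ (Fin (ℓ - (q + 1))) ≃ Fin ℓ :=
    finSumFinEquiv.trans (finCongr hsum) with he2
  have he2l : ∀ t : Fin (q + 1), ((e2 (Sum.inl t) : Fin ℓ) : ℕ) = (t : ℕ) := by
    intro t; simp [he2]
  have he2r : ∀ s : Fin (ℓ - (q + 1)), ((e2 (Sum.inr s) : Fin ℓ) : ℕ) = (q + 1) + (s : ℕ) := by
    intro s; simp [he2]
  have h3 : M.det = T.det := by
    rw [← Matrix.det_submatrix_equiv_self e2 M]
    have hblock : M.submatrix e2 e2 = Matrix.fromBlocks T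
        (Matrix.of fun (t : Fin (q + 1)) (s : Fin (ℓ - (q + 1))) =>
          M (e2 (Sum.inl t)) (e2 (Sum.inr s)))
        0
        (Matrix.of fun (s s' : Fin (ℓ - (q + 1))) =>
          AfD a n (((q + 1) + (s : ℕ) : ℕ) : ℤ) ((q + 1) + (s' : ℕ))) := by
      ext i j
      cases i with
      | inl t =>
        cases j with
        | inl t' =>
          rw [Matrix.submatrix_apply, Matrix.fromBlocks_apply₁₁, hMval]
          simp only [hT, Matrix.of_apply, he2l]
        | inr s => rw [Matrix.submatrix_apply, Matrix.fromBlocks_apply₁₂, Matrix.of_apply]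
      | inr s =>
        cases j with
        | inl t' =>
          rw [Matrix.submatrix_apply, Matrix.fromBlocks_apply₂₁, hMval, Matrix.zero_apply,
            if_neg (by rw [he2r]; omega), AfD_zero]
          rw [he2l, he2r]
          have := t'.isLt
          push_cast
          omega
        | inr s' =>
          rw [Matrix.submatrix_apply, Matrix.fromBlocks_apply₂₂, hMval, Matrix.of_apply,
            if_neg (by rw [he2r]; omega)]
          rw [he2r, he2r]
    rw [hblock, Matrix.det_fromBlocks_zero₂₁]
    have hU : (Matrix.of fun (s s' : Fin (ℓ - (q + 1))) =>
        AfD a n (((q + 1) + (s : ℕ) : ℕ) : ℤ) ((q + 1) + (s' : ℕ))).det = 1 := by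
      rw [Matrix.det_of_upperTriangular]
      · apply Finset.prod_eq_one
        intro s _
        simp only [Matrix.of_apply]
        exact AfD_diag a n ((q + 1) + (s : ℕ))
      · intro s s' hss
        simp only [Matrix.of_apply]
        apply AfD_zero
        have : (s' : ℕ) < (s : ℕ) := hss
        push_cast
        omega
    rw [hU, mul_one]
  rw [h1, h2, ← h3, hM]

end AuxCombinatorics

section AuxLinearAlgebra
open Finset

variable {R : Type*} [CommRing R]

/-- determinant of a matrix whose rows are unit vectors except at positions `qv t` -/
lemma det_unit_rows {ι : Type*} [Fintype ι] [DecidableEq ι] {d : ℕ}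
    (qv : Fin d → ι) (hq : Function.Injective qv) (c : Fin d → ι → R) :
    (Matrix.of fun k j : ι =>
        if h : ∃ t, qv t = k then c h.choose j else (if j = k then (1:R) else 0)).det =
      (Matrix.of fun t s : Fin d => c t (qv s)).det := by
  classical
  set C : Matrix ι ι R := Matrix.of fun k j : ι =>
    if h : ∃ t, qv t = k then c h.choose j else (if j = k then (1:R) else 0) with hC
  have hCq : ∀ (t : Fin d) (j : ι), C (qv t) j = c t j := by
    intro t j
    have h : ∃ t', qv t' = qv t := ⟨t, rfl⟩
    have hch : h.choose = t := hq h.choose_spec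
    simp only [hC, Matrix.of_apply, dif_pos h, hch]
  have hCn : ∀ (k : ι), (¬ ∃ t, qv t = k) → ∀ j, C k j = (if j = k then (1:R) else 0) := by
    intro k hk j
    simp only [hC, Matrix.of_apply, dif_neg hk]
  let e : (Fin d) ⊕ {x : ι // x ∉ Set.range qv} ≃ ι :=
    (Equiv.sumCongr (Equiv.ofInjective qv hq) (Equiv.refl _)).trans
      (Equiv.sumCompl (· ∈ Set.range qv))
  have he1 : ∀ t : Fin d, e (Sum.inl t) = qv t := fun t => rfl
  have he2 : ∀ x : {x : ι // x ∉ Set.range qv}, e (Sum.inr x) = (x : ι) := fun x => rfl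
  have hdet : C.det = (C.submatrix e e).det := (Matrix.det_submatrix_equiv_self e C).symm
  rw [hdet]
  have hblock : C.submatrix e e =
      Matrix.fromBlocks (Matrix.of fun t s : Fin d => c t (qv s))
        (Matrix.of fun (t : Fin d) (x : {x : ι // x ∉ Set.range qv}) => c t (x : ι))
        0 1 := by
    ext i j
    cases i with
    | inl t =>
      cases j with
      | inl s =>
        simp only [Matrix.submatrix_apply, he1, Matrix.fromBlocks_apply₁₁, Matrix.of_apply]
        rw [hCq]
      | inr x =>
        simp only [Matrix.submatrix_apply, he1, he2, Matrix.fromBlocks_apply₁₂, Matrix.of_apply]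
        rw [hCq]
    | inr x =>
      cases j with
      | inl s =>
        simp only [Matrix.submatrix_apply, he1, he2, Matrix.fromBlocks_apply₂₁,
          Matrix.zero_apply]
        rw [hCn _ (by
          intro hcon
          exact x.2 (by rcases hcon with ⟨t, ht⟩; exact ⟨t, ht⟩))]
        rw [if_neg]
        intro hcon
        exact x.2 ⟨s, hcon⟩
      | inr y =>
        simp only [Matrix.submatrix_apply, he2, Matrix.fromBlocks_apply₂₂]
        rw [hCn _ (by
          intro hcon
          exact x.2 (by rcases hcon with ⟨t, ht⟩; exact ⟨t, ht⟩))]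
        rw [Matrix.one_apply]
        by_cases hxy : x = y
        · simp [hxy]
        · rw [if_neg (by intro hcon; exact hxy (Subtype.ext hcon.symm)),
            if_neg (by intro hcon; exact hxy hcon)]
  rw [hblock, Matrix.det_fromBlocks_zero₂₁]
  simp

/-- single row replacement determinant -/
lemma det_updateRow_of_det_one {ι : Type*} [Fintype ι] [DecidableEq ι]
    (B : Matrix ι ι R) (hB : B.det = 1) (k : ι) (w : ι → R) :
    (B.updateRow k w).det = Matrix.vecMul w B⁻¹ k := by
  have hunit : IsUnit B.det := by rw [hB]; exact isUnit_one
  have hw : w = ∑ m, Matrix.vecMul w B⁻¹ m • B m := by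
    have h1 : Matrix.vecMul (Matrix.vecMul w B⁻¹) B = w := by
      rw [Matrix.vecMul_vecMul, Matrix.nonsing_inv_mul B hunit, Matrix.vecMul_one]
    funext j
    have h2 : (∑ m, Matrix.vecMul w B⁻¹ m • B m) j = Matrix.vecMul (Matrix.vecMul w B⁻¹) B j := by
      simp only [Matrix.vecMul, dotProduct, Finset.sum_apply, Pi.smul_apply, smul_eq_mul]
    rw [h2, h1]
  conv_lhs => rw [hw]
  rw [Matrix.det_updateRow_sum, hB]
  simp

end AuxLinearAlgebra

section AuxSign
open Finset Equiv Equiv.Perm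

lemma perm_strictMono_eq (n : ℕ) (σ : Equiv.Perm (Fin n)) (h : StrictMono σ) :
    ∀ i, σ i = i := by
  have hiso : (StrictMono.orderIsoOfSurjective (σ : Fin n → Fin n) h σ.surjective) =
      OrderIso.refl (Fin n) := Subsingleton.elim _ _
  intro i
  have := congrArg (fun f => (f : Fin n ≃o Fin n) i) hiso
  simpa using this

def eSub (m : ℕ) : {x : Fin (m+1) // (x : ℕ) < m} ≃ Fin m where
  toFun x := ⟨x.1, x.2⟩
  invFun y := ⟨⟨y, Nat.lt_succ_of_lt y.2⟩, y.2⟩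
  left_inv := by intro x; rfl
  right_inv := by intro y; rfl

lemma sign_dec_inc_aux : ∀ (K n d : ℕ), n + d ≤ K → ∀ (σ : Equiv.Perm (Fin n)),
    (∀ i j : Fin n, (i : ℕ) < j → (j : ℕ) < d → (σ j : ℕ) < σ i) →
    (∀ i j : Fin n, d ≤ (i : ℕ) → (i : ℕ) < j → (σ i : ℕ) < σ j) →
    Equiv.Perm.sign σ =
      (-1) ^ (∑ i ∈ Finset.univ.filter (fun i : Fin n => (i : ℕ) < d), (σ i : ℕ)) := by
  intro K
  induction K with
  | zero =>
    intro n d h σ _ _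
    have hn : n = 0 := by omega
    subst hn
    have h0 : σ = 1 := Equiv.ext fun x => x.elim0
    simp [h0]
  | succ K ih =>
    intro n d hK σ hdec hinc
    -- WLOG d ≤ n
    rcases le_or_gt d n with hdn | hdn
    swap
    · have h1 := ih n n (by omega) σ
        (fun i j h1 h2 => hdec i j h1 (by omega)) (fun i j h1 h2 => by omega)
      rw [filter_true_of_mem (fun i _ => i.isLt)] at h1
      rw [filter_true_of_mem (fun (i : Fin n) _ => lt_trans i.isLt hdn)]
      exact h1
    rcases Nat.eq_zero_or_pos d with rfl | hd
    · have hmono : StrictMono σ := by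
        intro i j hij
        exact hinc i j (Nat.zero_le _) hij
      have h0 : σ = 1 := Equiv.ext (perm_strictMono_eq n σ hmono)
      simp [h0]
    rcases n with _ | m
    · omega
    rcases Nat.eq_zero_or_pos m with rfl | hm
    · have h0 : σ = 1 := Equiv.ext fun x => by
        have := (σ x).isLt; have := x.isLt; apply Fin.ext; omega
      subst h0
      simp
    by_cases hlast : σ (Fin.last m) = Fin.last m
    · -- case A : strip the fixed last point
      have hdm : d ≤ m := by
        by_contra hcon
        have := hdec ⟨0, by omega⟩ (Fin.last m) (by simp [Fin.last]; omega)
          (by simp [Fin.last]; omega)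
        rw [hlast] at this
        have h2 := (σ ⟨0, by omega⟩).isLt
        simp [Fin.last] at this
        omega
      have h₁ : ∀ x : Fin (m+1), ((x : ℕ) < m) ↔ ((σ x : ℕ) < m) := by
        intro x
        constructor
        · intro hx
          by_contra hcon
          have h2 : σ x = Fin.last m := by
            apply Fin.ext; simp only [Fin.val_last]; have := (σ x).isLt; omega
          have h3 : x = Fin.last m := σ.injective (h2.trans hlast.symm)
          rw [h3] at hx; simp [Fin.last] at hx
        · intro hx
          by_contra hcon
          have h2 : x = Fin.last m := by
            apply Fin.ext; simp only [Fin.val_last]; have := x.isLt; omega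
          rw [h2, hlast] at hx; simp [Fin.last] at hx
      have h₂ : ∀ x : Fin (m+1), σ x ≠ x → (x : ℕ) < m := by
        intro x hx
        by_contra hcon
        have h2 : x = Fin.last m := by
          apply Fin.ext; simp only [Fin.val_last]; have := x.isLt; omega
        exact hx (by rw [h2, hlast])
      let σ' : Equiv.Perm (Fin m) := (eSub m).permCongr (σ.subtypePerm (fun x => (h₁ x).symm))
      have hval : ∀ y : Fin m, (σ' y : ℕ) = (σ ⟨(y : ℕ), Nat.lt_succ_of_lt y.2⟩ : ℕ) := by
        intro y; rfl
      have hs : Equiv.Perm.sign σ' = Equiv.Perm.sign σ := by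
        show Equiv.Perm.sign ((eSub m).permCongr (σ.subtypePerm (fun x => (h₁ x).symm))) = _
        rw [Equiv.Perm.sign_permCongr]
        exact Equiv.Perm.sign_subtypePerm σ (fun x => (h₁ x).symm) h₂
      have hrec := ih m d (by omega) σ'
        (by
          intro i j hij hjd
          rw [hval, hval]
          exact hdec _ _ hij hjd)
        (by
          intro i j hdi hij
          rw [hval, hval]
          exact hinc _ _ hdi hij)
      rw [← hs, hrec]
      congr 1
      refine Finset.sum_bij'
        (i := fun (y : Fin m) (_ : y ∈ _) => (⟨(y : ℕ), Nat.lt_succ_of_lt y.2⟩ : Fin (m+1)))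
        (j := fun (x : Fin (m+1)) (hx : x ∈ _) => (⟨(x : ℕ), by
          simp only [mem_filter] at hx; omega⟩ : Fin m)) ?_ ?_ ?_ ?_ ?_
      · intro y hy
        simp only [mem_filter, mem_univ, true_and] at hy ⊢
        exact hy
      · intro x hx
        simp only [mem_filter, mem_univ, true_and] at hx ⊢
        exact hx
      · intro y _; rfl
      · intro x _; rfl
      · intro y hy
        rw [hval]
    · -- case B : σ 0 = last, rotate
      have h0 : σ ⟨0, by omega⟩ = Fin.last m := by
        set i := σ.symm (Fin.last m) with hi
        have hσi : σ i = Fin.last m := σ.apply_symm_apply _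
        have : i = ⟨0, by omega⟩ := by
          by_contra hcon
          rcases lt_or_ge (i : ℕ) d with hid | hid
          · have hi0 : 0 < (i : ℕ) := by
              rcases Nat.eq_zero_or_pos (i : ℕ) with h | h
              · exact absurd (Fin.ext h) hcon
              · exact h
            have := hdec ⟨0, by omega⟩ i hi0 hid
            rw [hσi] at this
            simp only [Fin.val_last] at this
            have := (σ ⟨0, by omega⟩).isLt
            omega
          · rcases lt_or_ge (i : ℕ) m with him | him
            · have := hinc i (Fin.last m) hid (by simpa using him)
              rw [hσi] at this
              simp only [Fin.val_last] at this
              have := (σ (Fin.last m)).isLt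
              omega
            · have : i = Fin.last m := by apply Fin.ext; simp only [Fin.val_last]; have := i.isLt; omega
              rw [this] at hσi
              exact hlast hσi
        rw [← this]; exact hσi
      set r := finRotate (m+1) with hr
      set τ := σ * r with hτ
      have hτval : ∀ (x : Fin (m+1)) (hx : (x : ℕ) < m), (τ x : ℕ) = (σ ⟨(x : ℕ)+1, by omega⟩ : ℕ) := by
        intro x hx
        have : r x = ⟨(x : ℕ)+1, by omega⟩ := by
          rw [hr, finRotate_succ_apply]
          apply Fin.ext
          rw [Fin.val_add_one]
          split
          · rename_i hcon
            rw [Fin.ext_iff] at hcon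
            simp only [Fin.val_last] at hcon
            omega
          · rfl
        simp only [hτ, Equiv.Perm.mul_apply, this]
      have hτlast : τ (Fin.last m) = Fin.last m := by
        have : r (Fin.last m) = ⟨0, by omega⟩ := by
          rw [hr, finRotate_succ_apply]
          apply Fin.ext
          rw [Fin.val_add_one]
          simp [Fin.last]
        simp only [hτ, Equiv.Perm.mul_apply, this, h0]
      have hrec := ih (m+1) (d-1) (by omega) τ
        (by
          intro i j hij hjd
          rw [hτval i (by omega), hτval j (by omega)]
          exact hdec ⟨(i:ℕ)+1, by omega⟩ ⟨(j:ℕ)+1, by omega⟩ (by simpa using hij) (by simp; omega))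
        (by
          intro i j hdi hij
          rcases lt_or_ge (j : ℕ) m with hjm | hjm
          · rw [hτval i (by omega), hτval j (by omega)]
            exact hinc ⟨(i:ℕ)+1, by omega⟩ ⟨(j:ℕ)+1, by omega⟩ (by simp; omega) (by simpa using hij)
          · have hj : j = Fin.last m := by apply Fin.ext; simp only [Fin.val_last]; have := j.isLt; omega
            rw [hj, hτlast]
            rw [hτval i (by omega)]
            simp only [Fin.val_last]
            have h2 : σ ⟨(i:ℕ)+1, by omega⟩ ≠ Fin.last m := by
              intro hcon
              have := σ.injective (hcon.trans h0.symm)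
              simp only [Fin.ext_iff] at this
              omega
            have := (σ ⟨(i:ℕ)+1, by omega⟩).isLt
            simp only [ne_eq, Fin.ext_iff, Fin.val_last] at h2
            omega)
      have hsum : (∑ i ∈ Finset.univ.filter (fun i : Fin (m+1) => (i : ℕ) < d), (σ i : ℕ)) =
          m + (∑ i ∈ Finset.univ.filter (fun i : Fin (m+1) => (i : ℕ) < d - 1), (τ i : ℕ)) := by
        have hbij : (∑ i ∈ Finset.univ.filter (fun i : Fin (m+1) => (i : ℕ) < d - 1), (τ i : ℕ)) =
            (∑ i ∈ Finset.univ.filter (fun i : Fin (m+1) => 0 < (i : ℕ) ∧ (i : ℕ) < d), (σ i : ℕ)) := by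
          refine Finset.sum_bij'
            (i := fun (x : Fin (m+1)) (hx : x ∈ _) => (⟨(x : ℕ)+1, by
              simp only [mem_filter] at hx; omega⟩ : Fin (m+1)))
            (j := fun (x : Fin (m+1)) (hx : x ∈ _) => (⟨(x : ℕ)-1, by omega⟩ : Fin (m+1)))
            ?_ ?_ ?_ ?_ ?_
          · intro x hx
            simp only [mem_filter, mem_univ, true_and] at hx ⊢
            show 0 < (x:ℕ)+1 ∧ (x:ℕ)+1 < d
            omega
          · intro x hx
            simp only [mem_filter, mem_univ, true_and] at hx ⊢
            show (x:ℕ)-1 < d-1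
            omega
          · intro x hx
            simp only [mem_filter, mem_univ, true_and] at hx
            apply Fin.ext
            show ((x:ℕ)+1)-1 = (x:ℕ)
            omega
          · intro x hx
            simp only [mem_filter, mem_univ, true_and] at hx
            apply Fin.ext
            show ((x:ℕ)-1)+1 = (x:ℕ)
            omega
          · intro x hx
            simp only [mem_filter, mem_univ, true_and] at hx
            exact hτval x (by omega)
        rw [hbij]
        have hsplit : Finset.univ.filter (fun i : Fin (m+1) => (i : ℕ) < d) =
            insert (⟨0, by omega⟩ : Fin (m+1))
              (Finset.univ.filter (fun i : Fin (m+1) => 0 < (i : ℕ) ∧ (i : ℕ) < d)) := by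
          ext x
          simp only [mem_filter, mem_insert, mem_univ, true_and, Fin.ext_iff]
          omega
        rw [hsplit, Finset.sum_insert (by simp)]
        rw [h0]
        simp [Fin.last]
      have hsign : Equiv.Perm.sign σ = Equiv.Perm.sign τ * (-1) ^ m := by
        have h1 : σ = τ * r⁻¹ := by rw [hτ]; simp [mul_assoc]
        rw [h1, Equiv.Perm.sign_mul, Equiv.Perm.sign_inv, hr, sign_finRotate, Nat.add_sub_cancel]
      rw [hsign, hrec, hsum, pow_add]
      exact mul_comm _ _

end AuxSign

/-- **Giambelli formula.** For `μ = (p_1,…,p_d | q_1,…,q_d)` and `n ≥ 1`: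
`s_{μ;a} = det [s_{(p_i|q_j);a}]_{i,j=1}^d` in `ℂ[x_1,…,x_n]`. -/
theorem sMuP_giambelli (a : ℤ → ℂ) (μ : YoungDiagram) (n : ℕ) (hn : 1 ≤ n) :
    sMuP a μ n =
      Matrix.det (Matrix.of fun i j : Fin (dep μ) =>
        sMuP a (hookYD (pF μ i) (qF μ j)) n) := by
  classical
  have hd : dep μ ≤ μ.colLen 0 := dep_le_colLen μ
  have hql : ∀ t : Fin (dep μ), qF μ (t : ℕ) < μ.colLen 0 := fun t => qF_lt_colLen μ t t.2
  set qv : Fin (dep μ) → Fin (μ.colLen 0) := fun t => ⟨qF μ (t : ℕ), hql t⟩ with hqv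
  have hqinj : Function.Injective qv := by
    intro s t hst
    have h1 : qF μ (s : ℕ) = qF μ (t : ℕ) := congrArg Fin.val hst
    by_contra hne
    have hne' : (s : ℕ) ≠ (t : ℕ) := fun h => hne (Fin.ext h)
    rcases Nat.lt_or_ge (s : ℕ) (t : ℕ) with h | h
    · have := qF_strict_anti μ s t h t.2; omega
    · have := qF_strict_anti μ t s (by omega) s.2; omega
  set Bm : Matrix (Fin (μ.colLen 0)) (Fin (μ.colLen 0)) (MvPolynomial (Fin n) ℂ) :=
    Matrix.of fun k j => AfD a n ((k : ℕ) : ℤ) (j : ℕ) with hBm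
  have hBdet : Bm.det = 1 := by
    rw [Matrix.det_of_upperTriangular]
    · apply Finset.prod_eq_one; intro k _; exact AfD_diag a n (k : ℕ)
    · intro i j hij
      exact AfD_zero a n _ _ (by exact_mod_cast hij)
  set vv : Fin (dep μ) → Fin (μ.colLen 0) → MvPolynomial (Fin n) ℂ :=
    fun t j => AfD a n (-((pF μ (t : ℕ) : ℤ) + 1)) (j : ℕ) with hvv
  set cc : Fin (dep μ) → Fin (μ.colLen 0) → MvPolynomial (Fin n) ℂ :=
    fun t => Matrix.vecMul (vv t) Bm⁻¹ with hcc
  have hBunit : IsUnit Bm.det := by rw [hBdet]; exact isUnit_one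
  have hrowc : ∀ t, Matrix.vecMul (cc t) Bm = vv t := by
    intro t
    rw [hcc, Matrix.vecMul_vecMul, Matrix.nonsing_inv_mul Bm hBunit, Matrix.vecMul_one]
  set Cm : Matrix (Fin (μ.colLen 0)) (Fin (μ.colLen 0)) (MvPolynomial (Fin n) ℂ) :=
    Matrix.of fun k j => if h : ∃ t, qv t = k then cc h.choose j
      else (if j = k then 1 else 0) with hCm
  have hCq : ∀ t j, Cm (qv t) j = cc t j := by
    intro t j
    have h : ∃ t', qv t' = qv t := ⟨t, rfl⟩
    simp only [hCm, Matrix.of_apply, dif_pos h, hqinj h.choose_spec]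
  have hCn : ∀ k, (¬ ∃ t, qv t = k) → ∀ j, Cm k j = (if j = k then 1 else 0) := by
    intro k hk j; simp only [hCm, Matrix.of_apply, dif_neg hk]
  have hCB1 : ∀ t j, (Cm * Bm) (qv t) j = vv t j := by
    intro t j
    rw [Matrix.mul_apply, Finset.sum_congr rfl (fun m _ => by rw [hCq])]
    have : ∑ m, cc t m * Bm m j = Matrix.vecMul (cc t) Bm j := by
      simp [Matrix.vecMul, dotProduct]
    rw [this, hrowc]
  have hCB2 : ∀ k, (¬ ∃ t, qv t = k) → ∀ j, (Cm * Bm) k j = Bm k j := by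
    intro k hk j
    rw [Matrix.mul_apply, Finset.sum_congr rfl (fun m _ => by rw [hCn k hk])]
    simp [ite_mul]
  have hrpos : ∀ i : Fin (μ.colLen 0), 0 < μ.rowLen (i : ℕ) :=
    fun i => rowLen_pos_of_lt_colLen μ _ i.2
  set f : Fin (μ.colLen 0) → Fin (μ.colLen 0) := fun i =>
    if h : (i : ℕ) < dep μ then qv ⟨(i : ℕ), h⟩
    else ⟨(i : ℕ) - μ.rowLen (i : ℕ), by have := hrpos i; have := i.isLt; omega⟩ with hf
  have hfv1 : ∀ (i : Fin (μ.colLen 0)) (h : (i : ℕ) < dep μ), (f i : ℕ) = qF μ (i : ℕ) := by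
    intro i h; simp only [hf, dif_pos h]; rfl
  have hfv2 : ∀ (i : Fin (μ.colLen 0)) (h : ¬ (i : ℕ) < dep μ),
      (f i : ℕ) = (i : ℕ) - μ.rowLen (i : ℕ) := by
    intro i h; simp only [hf, dif_neg h]
  have hrle : ∀ i : Fin (μ.colLen 0), ¬ (i : ℕ) < dep μ → μ.rowLen (i : ℕ) ≤ (i : ℕ) :=
    fun i h => rowLen_le_of_dep_le μ _ (by omega)
  have hfinj : Function.Injective f := by
    intro i i' hii
    have hval : (f i : ℕ) = (f i' : ℕ) := congrArg Fin.val hii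
    apply Fin.ext
    by_cases h1 : (i : ℕ) < dep μ <;> by_cases h2 : (i' : ℕ) < dep μ
    · rw [hfv1 i h1, hfv1 i' h2] at hval
      by_contra hne
      rcases Nat.lt_or_ge (i : ℕ) (i' : ℕ) with h | h
      · have := qF_strict_anti μ i i' h h2; omega
      · have := qF_strict_anti μ i' i (by omega) h1; omega
    · rw [hfv1 i h1, hfv2 i' h2] at hval
      exact absurd hval.symm (key_disjoint μ i' i (by omega) i'.isLt h1)
    · rw [hfv2 i h1, hfv1 i' h2] at hval
      exact absurd hval (key_disjoint μ i i' (by omega) i.isLt h2)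
    · rw [hfv2 i h1, hfv2 i' h2] at hval
      have r1 := hrle i h1; have r2 := hrle i' h2
      by_contra hne
      rcases Nat.lt_or_ge (i : ℕ) (i' : ℕ) with h | h
      · have := μ.rowLen_anti (i : ℕ) (i' : ℕ) (by omega); omega
      · have := μ.rowLen_anti (i' : ℕ) (i : ℕ) (by omega); omega
  set σp : Equiv.Perm (Fin (μ.colLen 0)) :=
    Equiv.ofBijective f (Finite.injective_iff_bijective.1 hfinj) with hσp
  have hσf : ∀ i, σp i = f i := fun i => rfl
  -- identify the Jacobi--Trudi matrix with a row-permuted `Cm * Bm`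
  have hSmat : (Matrix.of fun i j : Fin (μ.colLen 0) =>
      hkaP (shiftSeq (-(j : ℤ)) a) n ((μ.rowLen i : ℤ) - i + j)) =
      (Cm * Bm).submatrix σp id := by
    funext i j
    rw [Matrix.submatrix_apply, id, hσf]
    by_cases h : (i : ℕ) < dep μ
    · have hfi : f i = qv ⟨(i : ℕ), h⟩ := by simp only [hf, dif_pos h]
      rw [hfi, hCB1, hvv]
      show hkaP (shiftSeq (-(j : ℤ)) a) n ((μ.rowLen (i : ℕ) : ℤ) - (i : ℕ) + (j : ℕ)) =
        AfD a n (-((pF μ (i : ℕ) : ℤ) + 1)) (j : ℕ)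
      rw [AfD]
      have harg : ((j : ℕ) : ℤ) - (-((pF μ (i : ℕ) : ℤ) + 1)) =
          (μ.rowLen (i : ℕ) : ℤ) - (i : ℕ) + (j : ℕ) := by
        rw [rowLen_eq_pF μ _ h]; push_cast; ring
      rw [harg]
    · have hfi : f i = ⟨(i : ℕ) - μ.rowLen (i : ℕ), by
        have := hrpos i; have := i.isLt; omega⟩ := by simp only [hf, dif_neg h]
      have hnq : ¬ ∃ t, qv t = f i := by
        rintro ⟨t, ht⟩
        have : qF μ (t : ℕ) = (i : ℕ) - μ.rowLen (i : ℕ) := by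
          have := congrArg Fin.val ht
          rw [hfi] at this
          simpa [hqv] using this
        exact key_disjoint μ i t (by omega) i.isLt t.2 this.symm
      rw [hCB2 _ hnq, hfi, hBm]
      show hkaP (shiftSeq (-(j : ℤ)) a) n ((μ.rowLen (i : ℕ) : ℤ) - (i : ℕ) + (j : ℕ)) =
        AfD a n ((((i : ℕ) - μ.rowLen (i : ℕ) : ℕ) : ℤ)) (j : ℕ)
      rw [AfD]
      have harg : ((j : ℕ) : ℤ) - (((i : ℕ) - μ.rowLen (i : ℕ) : ℕ) : ℤ) =
          (μ.rowLen (i : ℕ) : ℤ) - (i : ℕ) + (j : ℕ) := by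
        have := hrle i h
        push_cast [this]
        ring
      rw [harg]
  -- the sign of `σp`
  have hdec : ∀ i j : Fin (μ.colLen 0), (i : ℕ) < (j : ℕ) → (j : ℕ) < dep μ →
      ((σp j : ℕ)) < (σp i : ℕ) := by
    intro i j hij hjd
    rw [hσf, hσf, hfv1 j hjd, hfv1 i (by omega)]
    exact qF_strict_anti μ _ _ hij hjd
  have hinc : ∀ i j : Fin (μ.colLen 0), dep μ ≤ (i : ℕ) → (i : ℕ) < (j : ℕ) →
      ((σp i : ℕ)) < (σp j : ℕ) := by
    intro i j hdi hij
    rw [hσf, hσf, hfv2 i (by omega), hfv2 j (by omega)]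
    have r1 := hrle i (by omega)
    have := μ.rowLen_anti (i : ℕ) (j : ℕ) (by omega)
    have := hrpos j
    omega
  have hsign : Equiv.Perm.sign σp = (-1 : ℤˣ) ^ (∑ t : Fin (dep μ), qF μ (t : ℕ)) := by
    rw [sign_dec_inc_aux (μ.colLen 0 + dep μ) (μ.colLen 0) (dep μ) le_rfl σp hdec hinc]
    congr 1
    refine Finset.sum_bij'
      (i := fun (x : Fin (μ.colLen 0)) (hx : x ∈ _) => (⟨(x : ℕ), by
        simp only [Finset.mem_filter] at hx; exact hx.2⟩ : Fin (dep μ)))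
      (j := fun (t : Fin (dep μ)) (_ : t ∈ _) => (⟨(t : ℕ), by omega⟩ : Fin (μ.colLen 0)))
      ?_ ?_ ?_ ?_ ?_
    · intro x hx; exact Finset.mem_univ _
    · intro t ht
      simp only [Finset.mem_filter, Finset.mem_univ, true_and]
      exact t.2
    · intro x hx; apply Fin.ext; rfl
    · intro t ht; apply Fin.ext; rfl
    · intro x hx
      simp only [Finset.mem_filter, Finset.mem_univ, true_and] at hx
      rw [hσf, hfv1 x hx]
  -- LHS
  have hLHS : sMuP a μ n = ((Equiv.Perm.sign σp : ℤ) : MvPolynomial (Fin n) ℂ) *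
      (Matrix.of fun t s : Fin (dep μ) => cc t (qv s)).det := by
    rw [sMuP, hSmat, Matrix.det_permute, Matrix.det_mul, hBdet, mul_one]
    congr 1
    exact det_unit_rows qv hqinj cc
  -- RHS
  have hentry : ∀ i j : Fin (dep μ), sMuP a (hookYD (pF μ (i : ℕ)) (qF μ (j : ℕ))) n =
      (-1 : MvPolynomial (Fin n) ℂ) ^ (qF μ (j : ℕ)) * cc i (qv j) := by
    intro i j
    rw [hook_det_eq a n (μ.colLen 0) (pF μ (i : ℕ)) (qF μ (j : ℕ)) (hql j)]
    congr 1
    have h1 := det_updateRow_of_det_one Bm hBdet (qv j) (vv i)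
    have h2 : (fun jj : Fin (μ.colLen 0) => AfD a n (-((pF μ (i : ℕ) : ℤ) + 1)) (jj : ℕ)) = vv i := by
      rw [hvv]
    rw [← hBm]
    show ((Bm.updateRow ⟨qF μ (j : ℕ), hql j⟩
      (fun jj : Fin (μ.colLen 0) => AfD a n (-((pF μ (i : ℕ) : ℤ) + 1)) (jj : ℕ))).det) = cc i (qv j)
    rw [h2]
    exact h1
  have hRHS : Matrix.det (Matrix.of fun i j : Fin (dep μ) =>
      sMuP a (hookYD (pF μ i) (qF μ j)) n) =
      ((-1 : MvPolynomial (Fin n) ℂ) ^ (∑ t : Fin (dep μ), qF μ (t : ℕ))) *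
      (Matrix.of fun t s : Fin (dep μ) => cc t (qv s)).det := by
    have hmm : (Matrix.of fun i j : Fin (dep μ) => sMuP a (hookYD (pF μ i) (qF μ j)) n) =
        (Matrix.of fun i j : Fin (dep μ) =>
          (-1 : MvPolynomial (Fin n) ℂ) ^ (qF μ (j : ℕ)) * cc i (qv j)) := by
      funext i j
      exact hentry i j
    rw [hmm]
    have := Matrix.det_mul_row (fun j : Fin (dep μ) => (-1 : MvPolynomial (Fin n) ℂ) ^ (qF μ (j : ℕ)))
      (Matrix.of fun t s : Fin (dep μ) => cc t (qv s))
    simp only [Matrix.of_apply] at this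
    rw [this, Finset.prod_pow_eq_pow_sum]
  rw [hLHS, hRHS, hsign]
  congr 1
  push_cast
  rfl
end
end

section
/- Let μ be a nonempty partition, p = μ_1 − 1 and q = μ'_1 − 1, where μ' is the conjugate partition. If a and b are doubly infinite sequences of complex numbers with a_i = b_i for every integer i with 1 − q ≤ i ≤ p, then s_{μ;a}(x_1,…,x_m; y_1,…,y_n) = s_{μ;b}(x_1,…,x_m; y_1,…,y_n) in ℂ[x_1,…,x_m, y_1,…,y_n] for all m, n ≥ 0; i.e., s_{μ;a} depends only on the parameters a_i with 1 − q ≤ i ≤ p. -/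
open MvPolynomial Finset

noncomputable section

/-- the supersymmetric `h_k(x;y) = Σ_{r+s=k} h_r(x) e_s(y)` in `ℂ[x_1..x_m, y_1..y_n]`;
it is `0` for `k < 0`. -/
def hSup (m n : ℕ) (k : ℤ) : MvPolynomial (Fin m ⊕ Fin n) ℂ :=
  if k < 0 then 0 else
  ∑ rs ∈ Finset.HasAntidiagonal.antidiagonal k.toNat,
    (rename Sum.inl (hsymm (Fin m) ℂ rs.1)) * (rename Sum.inr (esymm (Fin n) ℂ rs.2))

/-- `h_{k;a}(x;y)` in `ℂ[x_1..x_m, y_1..y_n]`. -/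
def hka (a : ℤ → ℂ) (m n : ℕ) (k : ℤ) : MvPolynomial (Fin m ⊕ Fin n) ℂ :=
  if k < 0 then 0 else if k = 0 then 1 else
  ∑ i ∈ Finset.Icc 1 k.toNat,
    C ((-1) ^ (k.toNat - i) * eSeq a (k.toNat - 1) (k.toNat - i)) * hSup m n i

/-- the supersymmetric multiparameter Schur function `s_{μ;a}(x_1..x_m ; y_1..y_n)`,
defined as `det [h_{μ_i - i + j; τ^{1-j} a}(x;y)]` of size `ℓ(μ) × ℓ(μ)`. -/
def sMu (a : ℤ → ℂ) (μ : YoungDiagram) (m n : ℕ) : MvPolynomial (Fin m ⊕ Fin n) ℂ :=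
  Matrix.det (Matrix.of fun i j : Fin (μ.colLen 0) =>
    hka (shiftSeq (-(j : ℤ)) a) m n ((μ.rowLen i : ℤ) - i + j))

/-- For a nonempty partition `μ` with `p = μ_1 - 1` and `q = μ'_1 - 1`,
the function `s_{μ;a}` depends only on the parameters `a_i` with `1 - q ≤ i ≤ p`. -/
theorem sMu_depends_on_finitely_many_parameters (a b : ℤ → ℂ) (μ : YoungDiagram)
    (hμ : μ ≠ ⊥)
    (hab : ∀ i : ℤ, 1 - ((μ.colLen 0 : ℤ) - 1) ≤ i → i ≤ (μ.rowLen 0 : ℤ) - 1 → a i = b i)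
    (m n : ℕ) :
    sMu a μ m n = sMu b μ m n := by
  unfold sMu
  refine congrArg _ (Matrix.ext fun i j => ?_)
  simp only [Matrix.of_apply]
  set k : ℤ := (μ.rowLen i : ℤ) - i + j with hk
  unfold hka
  split_ifs with h1 h2
  · rfl
  · rfl
  · apply Finset.sum_congr rfl
    intro t ht
    congr 2
    unfold eSeq
    congr 1
    apply Finset.sum_congr rfl
    intro S hS
    apply Finset.prod_congr rfl
    intro c hc
    have hSsub := (Finset.mem_powersetCard.mp hS).1
    have hc' : c ∈ Finset.range (k.toNat - 1) := hSsub hc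
    have hclt : c < k.toNat - 1 := Finset.mem_range.mp hc'
    unfold shiftSeq
    have hjle : (j : ℤ) ≤ (μ.colLen 0 : ℤ) - 1 := by
      have := j.isLt
      omega
    have hkpos : 1 ≤ k := by omega
    have hkt : (k.toNat : ℤ) = k := Int.toNat_of_nonneg (by omega)
    have hrow : (μ.rowLen i : ℕ) ≤ μ.rowLen 0 := μ.rowLen_anti 0 i (Nat.zero_le i)
    apply hab
    · omega
    · have hkt1 : 1 ≤ k.toNat := by omega
      omega
end
end

section
/- Generating series for the multiparameter complete homogeneous functions: in the ring of formal power series in t over ℂ[x_1,…,x_n], 1 + Σ_{k ≥ 1} h_{k;a} · t^k · ∏_{i=1}^{k} (1 − a_i t)^{−1} = Σ_{k ≥ 0} h_k t^k, where (1 − c t)^{−1} denotes the geometric series Σ_{r ≥ 0} c^r t^r. (The sum over k converges coefficientwise, the k-th term being divisible by t^k.) -/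
open MvPolynomial Finset

noncomputable section

/- We work in the ring `(ℂ[x_1,…,x_n])[[t]]` of formal power series over `ℂ[x_1,…,x_n]`. -/

/-- the geometric series `(1 - c t)⁻¹ = Σ_{r ≥ 0} c^r t^r` for a scalar `c : ℂ`. -/
def geomSer (n : ℕ) (c : ℂ) : PowerSeries (MvPolynomial (Fin n) ℂ) :=
  PowerSeries.mk fun r => MvPolynomial.C (c ^ r)

/-- `H(t) = Σ_{k ≥ 0} h_k t^k`. -/
def Hser (n : ℕ) : PowerSeries (MvPolynomial (Fin n) ℂ) :=
  PowerSeries.mk fun k => hsymm (Fin n) ℂ k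

/-- the `k`-th term `h_{k;a} · t^k · ∏_{i=1}^k (1 - a_i t)⁻¹` of the generating series. -/
def hTerm (a : ℤ → ℂ) (n : ℕ) (k : ℕ) : PowerSeries (MvPolynomial (Fin n) ℂ) :=
  PowerSeries.C (hkaP a n (k : ℤ)) * PowerSeries.X ^ k *
    ∏ i ∈ Finset.Icc 1 k, geomSer n (a (i : ℤ))

namespace HkaAux

def Pser (n : ℕ) (c : ℂ) : PowerSeries (MvPolynomial (Fin n) ℂ) :=
  1 - PowerSeries.C (MvPolynomial.C c) * PowerSeries.X

lemma eSeq_zero (a : ℤ → ℂ) (num : ℕ) : eSeq a num 0 = 1 := by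
  simp [eSeq]

lemma eSeq_of_lt (a : ℤ → ℂ) {num deg : ℕ} (h : num < deg) : eSeq a num deg = 0 := by
  rw [eSeq, Finset.powersetCard_eq_empty.mpr (by simpa using h), Finset.sum_empty]

lemma eSeq_succ (a : ℤ → ℂ) (K q : ℕ) :
    eSeq a (K + 1) (q + 1) = eSeq a K (q + 1) + a ((K : ℤ) + 1) * eSeq a K q := by
  rw [eSeq, Finset.range_add_one,
    Finset.powersetCard_succ_insert (by simp) q,
    Finset.sum_union, Finset.sum_image]
  · rw [eSeq, eSeq, Finset.mul_sum]
    congr 1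
    refine Finset.sum_congr rfl fun S hS => ?_
    have hK : K ∉ S := fun h => by
      simpa using (Finset.mem_powersetCard.mp hS).1 h
    rw [Finset.prod_insert hK]
  · intro S hS T hT hST
    have hKS : K ∉ S := fun h => by simpa using (Finset.mem_powersetCard.mp hS).1 h
    have hKT : K ∉ T := fun h => by simpa using (Finset.mem_powersetCard.mp hT).1 h
    have := congrArg (Finset.erase · K) hST
    simpa [Finset.erase_insert, hKS, hKT] using this
  · rw [Finset.disjoint_left]
    intro S hS hS'
    have hKS : K ∉ S := fun h => by simpa using (Finset.mem_powersetCard.mp hS).1 h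
    obtain ⟨T, -, rfl⟩ := Finset.mem_image.mp hS'
    exact hKS (Finset.mem_insert_self _ _)


lemma geom_mul_P (n : ℕ) (c : ℂ) : geomSer n c * Pser n c = 1 := by
  ext m
  rw [Pser, mul_sub, mul_one, show geomSer n c * (PowerSeries.C (MvPolynomial.C c) * PowerSeries.X)
      = PowerSeries.C (MvPolynomial.C c) * (geomSer n c * PowerSeries.X) by ring,
    map_sub, PowerSeries.coeff_C_mul]
  cases m with
  | zero => simp [geomSer, PowerSeries.coeff_zero_mul_X]
  | succ m => simp [geomSer, PowerSeries.coeff_succ_mul_X, pow_succ, mul_comm]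

lemma coeff_prod_P (n : ℕ) (s : Finset ℕ) (c : ℕ → ℂ) :
    ∀ q : ℕ, s.card < q → PowerSeries.coeff q (∏ i ∈ s, Pser n (c i)) = 0 := by
  induction s using Finset.cons_induction with
  | empty =>
    intro q hq
    rw [Finset.prod_empty, PowerSeries.coeff_one, if_neg (by omega)]
  | cons x s hx ih =>
    intro q hq
    rw [Finset.prod_cons, Pser, sub_mul, one_mul,
      show PowerSeries.C (MvPolynomial.C (c x)) * PowerSeries.X * (∏ i ∈ s, Pser n (c i))
        = PowerSeries.C (MvPolynomial.C (c x)) * ((∏ i ∈ s, Pser n (c i)) * PowerSeries.X) by ring,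
      map_sub, PowerSeries.coeff_C_mul]
    rw [Finset.card_cons] at hq
    obtain ⟨q, rfl⟩ : ∃ q', q = q' + 1 := ⟨q - 1, by omega⟩
    rw [PowerSeries.coeff_succ_mul_X, ih q (by omega),
      ih (q+1) (by omega)]
    ring


lemma coeff_E (a : ℤ → ℂ) (n : ℕ) (K : ℕ) :
    ∀ q : ℕ, PowerSeries.coeff q (∏ i ∈ Finset.Icc 1 K, Pser n (a (i : ℤ)))
      = MvPolynomial.C ((-1) ^ q * eSeq a K q) := by
  induction K with
  | zero =>
    intro q
    rw [show Finset.Icc 1 0 = (∅ : Finset ℕ) by simp, Finset.prod_empty, PowerSeries.coeff_one]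
    cases q with
    | zero => simp [eSeq_zero]
    | succ q => rw [if_neg (by omega), eSeq_of_lt a (by omega)]; simp
  | succ K ih =>
    intro q
    rw [show Finset.Icc 1 (K + 1) = insert (K + 1) (Finset.Icc 1 K) by ext; simp; omega,
      Finset.prod_insert (by simp), Pser, sub_mul, one_mul,
      show PowerSeries.C (MvPolynomial.C (a ((K + 1 : ℕ) : ℤ))) * PowerSeries.X *
          ∏ i ∈ Finset.Icc 1 K, Pser n (a (i : ℤ))
        = PowerSeries.C (MvPolynomial.C (a ((K + 1 : ℕ) : ℤ))) *
          ((∏ i ∈ Finset.Icc 1 K, Pser n (a (i : ℤ))) * PowerSeries.X) by ring,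
      map_sub, PowerSeries.coeff_C_mul]
    cases q with
    | zero =>
      rw [PowerSeries.coeff_zero_mul_X, mul_zero, sub_zero, ih 0, eSeq_zero, eSeq_zero]
    | succ q =>
      rw [PowerSeries.coeff_succ_mul_X, ih (q + 1), ih q, eSeq_succ, ← map_mul, ← map_sub]
      congr 1
      push_cast
      ring

lemma hkaP_zero (a : ℤ → ℂ) (n : ℕ) : hkaP a n 0 = 1 := by simp [hkaP]

lemma hkaP_succ (a : ℤ → ℂ) (n K : ℕ) :
    hkaP a n ((K : ℤ) + 1) = ∑ i ∈ Finset.Icc 1 (K + 1),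
      MvPolynomial.C ((-1) ^ (K + 1 - i) * eSeq a K (K + 1 - i)) * hsymm (Fin n) ℂ i := by
  rw [hkaP, if_neg (by omega), if_neg (by omega),
    show ((K : ℤ) + 1).toNat = K + 1 by omega]
  simp


def Dser (a : ℤ → ℂ) (n K : ℕ) : PowerSeries (MvPolynomial (Fin n) ℂ) :=
  Hser n * ∏ i ∈ Finset.Icc 1 K, Pser n (a (i : ℤ)) -
  ∑ k ∈ Finset.range (K + 1), PowerSeries.C (hkaP a n (k : ℤ)) * PowerSeries.X ^ k *
    ∏ i ∈ Finset.Icc (k + 1) K, Pser n (a (i : ℤ))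

lemma coeff_D_top (a : ℤ → ℂ) (n K : ℕ) :
    PowerSeries.coeff (K + 1) (Dser a n K) = hkaP a n ((K : ℤ) + 1) := by
  rw [Dser, map_sub, map_sum]
  have hz : ∀ k ∈ Finset.range (K + 1),
      PowerSeries.coeff (K + 1) (PowerSeries.C (hkaP a n (k : ℤ)) * PowerSeries.X ^ k *
        ∏ i ∈ Finset.Icc (k + 1) K, Pser n (a (i : ℤ))) = 0 := by
    intro k hk
    have hk' : k ≤ K := by simpa [Nat.lt_succ_iff] using hk
    rw [mul_assoc, PowerSeries.coeff_C_mul,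
      show K + 1 = (K + 1 - k) + k by omega, PowerSeries.coeff_X_pow_mul,
      coeff_prod_P n _ _ _ (by rw [Nat.card_Icc]; omega), mul_zero]
  rw [Finset.sum_eq_zero hz, sub_zero, PowerSeries.coeff_mul,
    Finset.Nat.sum_antidiagonal_eq_sum_range_succ_mk]
  simp only [Hser, PowerSeries.coeff_mk, coeff_E a n K]
  rw [hkaP_succ,
    show Finset.range (K + 1 + 1) = insert 0 (Finset.Icc 1 (K + 1)) by ext; simp; omega,
    Finset.sum_insert (by simp), Nat.sub_zero, eSeq_of_lt a (Nat.lt_succ_self K), mul_zero,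
    map_zero, mul_zero, zero_add]
  exact Finset.sum_congr rfl fun i hi => mul_comm _ _

lemma Dser_succ (a : ℤ → ℂ) (n K : ℕ) :
    Dser a n (K + 1) = Dser a n K * Pser n (a ((K : ℤ) + 1)) -
      PowerSeries.C (hkaP a n ((K : ℤ) + 1)) * PowerSeries.X ^ (K + 1) := by
  have hins : Finset.Icc 1 (K + 1) = insert (K + 1) (Finset.Icc 1 K) := by ext; simp; omega
  rw [Dser, Dser, Finset.sum_range_succ, hins, Finset.prod_insert (by simp),
    show Finset.Icc (K + 1 + 1) (K + 1) = (∅ : Finset ℕ) by simp, Finset.prod_empty, mul_one]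
  have hsum : ∀ k ∈ Finset.range (K + 1),
      PowerSeries.C (hkaP a n (k : ℤ)) * PowerSeries.X ^ k *
        ∏ i ∈ Finset.Icc (k + 1) (K + 1), Pser n (a (i : ℤ))
      = PowerSeries.C (hkaP a n (k : ℤ)) * PowerSeries.X ^ k *
        (∏ i ∈ Finset.Icc (k + 1) K, Pser n (a (i : ℤ))) * Pser n (a ((K : ℤ) + 1)) := by
    intro k hk
    have hk' : k ≤ K := by simpa [Nat.lt_succ_iff] using hk
    rw [show Finset.Icc (k + 1) (K + 1) = insert (K + 1) (Finset.Icc (k + 1) K) by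
        ext; simp; omega,
      Finset.prod_insert (by simp), show ((K + 1 : ℕ) : ℤ) = (K : ℤ) + 1 by push_cast; ring]
    ring
  rw [Finset.sum_congr rfl hsum, ← Finset.sum_mul,
    show ((K + 1 : ℕ) : ℤ) = (K : ℤ) + 1 by push_cast; ring]
  ring

lemma coeff_D (a : ℤ → ℂ) (n : ℕ) :
    ∀ K : ℕ, ∀ m ≤ K, PowerSeries.coeff m (Dser a n K) = 0 := by
  intro K
  induction K with
  | zero =>
    intro m hm
    interval_cases m
    simp [Dser, Hser, hkaP_zero, hsymm_zero, show Finset.Icc 1 0 = (∅ : Finset ℕ) by simp]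
  | succ K ih =>
    intro m hm
    rw [Dser_succ, Pser, mul_sub, mul_one,
      show Dser a n K * (PowerSeries.C (MvPolynomial.C (a ((K : ℤ) + 1))) * PowerSeries.X)
        = PowerSeries.C (MvPolynomial.C (a ((K : ℤ) + 1))) * (Dser a n K * PowerSeries.X) by
        ring,
      map_sub, map_sub, PowerSeries.coeff_C_mul, PowerSeries.coeff_C_mul,
      PowerSeries.coeff_X_pow]
    by_cases hmK : m ≤ K
    · rw [ih m hmK, if_neg (by omega), mul_zero, sub_zero]
      cases m with
      | zero => rw [PowerSeries.coeff_zero_mul_X, mul_zero, sub_zero]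
      | succ m => rw [PowerSeries.coeff_succ_mul_X, ih m (by omega), mul_zero, sub_zero]
    · have hm1 : m = K + 1 := by omega
      subst hm1
      rw [coeff_D_top, PowerSeries.coeff_succ_mul_X, ih K le_rfl, mul_zero, sub_zero,
        if_pos rfl, mul_one, sub_self]


end HkaAux

/-- **generating series for `h_{k;a}`.**
`1 + Σ_{k ≥ 1} h_{k;a} t^k ∏_{i=1}^k (1 - a_i t)⁻¹ = Σ_{k ≥ 0} h_k t^k`.
The `k`-th term is divisible by `t^k`, so the sum converges coefficientwise; accordingly,
every coefficient of any sufficiently large finite partial sum of the left-hand side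
agrees with the corresponding coefficient of `H(t)`. -/
theorem hka_generating_series (a : ℤ → ℂ) (n : ℕ) :
    (∀ k : ℕ, 1 ≤ k → (PowerSeries.X : PowerSeries (MvPolynomial (Fin n) ℂ)) ^ k ∣
      hTerm a n k) ∧
    (∀ α K : ℕ, α ≤ K →
      PowerSeries.coeff α (1 + ∑ k ∈ Finset.Icc 1 K, hTerm a n k) =
      PowerSeries.coeff α (Hser n)) := by
  constructor
  · intro k hk
    refine ⟨PowerSeries.C (hkaP a n (k : ℤ)) * ∏ i ∈ Finset.Icc 1 k, geomSer n (a (i : ℤ)),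
      ?_⟩
    rw [hTerm]; ring
  · intro α K hαK
    set E : PowerSeries (MvPolynomial (Fin n) ℂ) :=
      ∏ i ∈ Finset.Icc 1 K, HkaAux.Pser n (a (i : ℤ)) with hE
    set G : PowerSeries (MvPolynomial (Fin n) ℂ) :=
      ∏ i ∈ Finset.Icc 1 K, geomSer n (a (i : ℤ)) with hG
    have hEG : E * G = 1 := by
      rw [hE, hG, ← Finset.prod_mul_distrib]
      exact Finset.prod_eq_one fun i _ => by rw [mul_comm]; exact HkaAux.geom_mul_P n _
    have key : (1 + ∑ k ∈ Finset.Icc 1 K, hTerm a n k) * E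
        = Hser n * E - HkaAux.Dser a n K := by
      rw [HkaAux.Dser, sub_sub_cancel, add_mul, one_mul, Finset.sum_mul,
        show Finset.range (K + 1) = insert 0 (Finset.Icc 1 K) by ext; simp; omega,
        Finset.sum_insert (by simp), Nat.cast_zero, HkaAux.hkaP_zero, map_one, pow_zero,
        mul_one, one_mul, show Finset.Icc (0 + 1) K = Finset.Icc 1 K from rfl, ← hE]
      refine congrArg (E + ·) ?_
      refine Finset.sum_congr rfl fun k hk => ?_
      obtain ⟨hk1, hk2⟩ := Finset.mem_Icc.mp hk
      have hsplit : E = (∏ i ∈ Finset.Icc 1 k, HkaAux.Pser n (a (i : ℤ))) *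
          ∏ i ∈ Finset.Icc (k + 1) K, HkaAux.Pser n (a (i : ℤ)) := by
        rw [hE, show Finset.Icc 1 K = Finset.Ioc 0 K from Finset.Icc_add_one_left_eq_Ioc _ _,
          show Finset.Icc 1 k = Finset.Ioc 0 k from Finset.Icc_add_one_left_eq_Ioc _ _,
          show Finset.Icc (k + 1) K = Finset.Ioc k K from Finset.Icc_add_one_left_eq_Ioc _ _,
          Finset.prod_Ioc_consecutive _ (Nat.zero_le k) hk2]
      have hGP : (∏ i ∈ Finset.Icc 1 k, geomSer n (a (i : ℤ))) *
          (∏ i ∈ Finset.Icc 1 k, HkaAux.Pser n (a (i : ℤ))) = 1 := by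
        rw [← Finset.prod_mul_distrib]
        exact Finset.prod_eq_one fun i _ => HkaAux.geom_mul_P n _
      calc hTerm a n k * E
          = PowerSeries.C (hkaP a n (k : ℤ)) * PowerSeries.X ^ k *
            ((∏ i ∈ Finset.Icc 1 k, geomSer n (a (i : ℤ))) *
              (∏ i ∈ Finset.Icc 1 k, HkaAux.Pser n (a (i : ℤ)))) *
            ∏ i ∈ Finset.Icc (k + 1) K, HkaAux.Pser n (a (i : ℤ)) := by
            rw [hTerm, hsplit]; ring
        _ = PowerSeries.C (hkaP a n (k : ℤ)) * PowerSeries.X ^ k *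
            ∏ i ∈ Finset.Icc (k + 1) K, HkaAux.Pser n (a (i : ℤ)) := by rw [hGP, mul_one]
    have main : (1 : PowerSeries (MvPolynomial (Fin n) ℂ)) + ∑ k ∈ Finset.Icc 1 K, hTerm a n k
        = Hser n - HkaAux.Dser a n K * G := by
      calc (1 : PowerSeries (MvPolynomial (Fin n) ℂ)) + ∑ k ∈ Finset.Icc 1 K, hTerm a n k
          = (1 + ∑ k ∈ Finset.Icc 1 K, hTerm a n k) * (E * G) := by rw [hEG, mul_one]
        _ = ((1 + ∑ k ∈ Finset.Icc 1 K, hTerm a n k) * E) * G := by ring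
        _ = (Hser n * E - HkaAux.Dser a n K) * G := by rw [key]
        _ = Hser n * (E * G) - HkaAux.Dser a n K * G := by ring
        _ = Hser n - HkaAux.Dser a n K * G := by rw [hEG, mul_one]
    rw [main, map_sub]
    rw [PowerSeries.coeff_mul, Finset.sum_eq_zero, sub_zero]
    intro p hp
    have hp1 : p.1 ≤ α := Finset.HasAntidiagonal.antidiagonal.fst_le hp
    rw [HkaAux.coeff_D a n K p.1 (le_trans hp1 hαK), zero_mul]
end
end
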